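/- arXiv:1808.05354 — 5 statements merged into one kernel-verified Lean document; each statement's English description precedes it below -/
import Mathlib

section
/- Let p be a prime, k ≥ 0, 1 ≤ t ≤ p^k, and q a power of p. Then q divides C(p^k, l) for all l = 1, 2, …, t if and only if q · p^{⌊log_p t⌋} divides p^k. -/
lemma choose_factorization_eq (p k l : ℕ) (hp : p.Prime) (hl0 : l ≠ 0) (hl : l ≤ p ^ k) :
    (Nat.choose (p ^ k) l).factorization p = k - l.factorization p := by
  have h := Nat.Prime.emultiplicity_choose_prime_pow hp hl hl0
  rw [(Nat.finiteMultiplicity_iff.2 ⟨hp.ne_one, Nat.choose_pos hl⟩).emultiplicity_eq_multiplicity,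
    Nat.multiplicity_eq_factorization hp (Nat.choose_pos hl).ne',
    Nat.cast_inj] at h
  rw [h, Nat.multiplicity_eq_factorization hp hl0]

/-- Let `p` be a prime, `k ≥ 0`, `1 ≤ t ≤ p^k`, and `q = p^e` a power of `p`.
Then `q` divides `C(p^k, l)` for all `l = 1, …, t` if and only if
`q * p^⌊log_p t⌋` divides `p^k`. -/
theorem pow_dvd_choose_iff (p k t e : ℕ) (hp : p.Prime)
    (ht1 : 1 ≤ t) (ht2 : t ≤ p ^ k) :
    (∀ l, 1 ≤ l → l ≤ t → p ^ e ∣ Nat.choose (p ^ k) l) ↔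
      p ^ e * p ^ Nat.log p t ∣ p ^ k := by
  have hlogk : Nat.log p t ≤ k := by
    calc Nat.log p t ≤ Nat.log p (p ^ k) := Nat.log_mono_right ht2
    _ = k := Nat.log_pow hp.one_lt _
  rw [← pow_add, Nat.pow_dvd_pow_iff_le_right hp.one_lt]
  constructor
  · intro h
    set l := p ^ Nat.log p t with hl
    have hlt : l ≤ t := Nat.pow_log_le_self p (by omega)
    have hl1 : 1 ≤ l := Nat.one_le_pow _ _ hp.pos
    have hd := h l hl1 hlt
    rw [hp.pow_dvd_iff_le_factorization (Nat.choose_pos (hlt.trans ht2)).ne',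
      choose_factorization_eq p k l hp (by omega) (hlt.trans ht2),
      hl, Nat.Prime.factorization_pow hp] at hd
    simp at hd
    omega
  · intro h l hl1 hlt
    have hlpk : l ≤ p ^ k := hlt.trans ht2
    rw [hp.pow_dvd_iff_le_factorization (Nat.choose_pos hlpk).ne',
      choose_factorization_eq p k l hp (by omega) hlpk]
    have hvl : l.factorization p ≤ Nat.log p t := by
      have hd : p ^ l.factorization p ∣ l := Nat.ordProj_dvd l p
      have hle : p ^ l.factorization p ≤ t := (Nat.le_of_dvd (by omega) hd).trans hlt
      have hlt2 : p ^ l.factorization p < p ^ (Nat.log p t).succ :=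
        lt_of_le_of_lt hle (Nat.lt_pow_succ_log_self hp.one_lt t)
      exact Nat.lt_succ_iff.mp ((Nat.pow_lt_pow_iff_right hp.one_lt).mp hlt2)
    omega
end

section
/- Let p be a prime, s ≥ 1, and q > 1 a power of p. The group of upper-triangular unipotent (s+1)×(s+1) matrices over ℤ/q has exponent q · p^{⌊log_p s⌋}. -/
open Finset

/-- Powers of a strictly upper triangular matrix vanish below the `k`-th superdiagonal. -/
lemma strictUpper_pow {n : ℕ} {R : Type*} [CommRing R]
    {N : Matrix (Fin n) (Fin n) R} (hN : ∀ i j : Fin n, (j : ℕ) ≤ (i : ℕ) → N i j = 0) :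
    ∀ (k : ℕ) (i j : Fin n), (j : ℕ) < (i : ℕ) + k → (N ^ k) i j = 0 := by
  intro k
  induction k with
  | zero =>
    intro i j h
    simp only [Nat.add_zero] at h
    rw [pow_zero]
    exact Matrix.one_apply_ne (by intro hij; rw [hij] at h; omega)
  | succ k ih =>
    intro i j h
    rw [pow_succ', Matrix.mul_apply]
    apply Finset.sum_eq_zero
    intro l _
    rcases le_or_gt (l : ℕ) (i : ℕ) with hl | hl
    · rw [hN i l hl, zero_mul]
    · rw [ih l j (by omega), mul_zero]

lemma add_one_pow_ring {A : Type*} [Ring A] (N : A) (t : ℕ) :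
    (N + 1) ^ t = ∑ k ∈ Finset.range (t + 1), (t.choose k) • N ^ k := by
  rw [Commute.add_pow (Commute.one_right N)]
  refine Finset.sum_congr rfl fun k _ => ?_
  rw [one_pow, mul_one, nsmul_eq_mul, (Nat.cast_commute (t.choose k) (N ^ k)).eq]

/-- `p^e` divides `choose (p^(e+L)) k` for `1 ≤ k ≤ s`, `L = log p s`. -/
lemma dvd_choose_pp {p e s k : ℕ} (hp : p.Prime) (he : 1 ≤ e) (hs : s ≠ 0)
    (hk1 : k ≠ 0) (hks : k ≤ s) : p ^ e ∣ (p ^ (e + Nat.log p s)).choose k := by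
  set L := Nat.log p s with hL
  have hsL : s < p ^ (L + 1) := Nat.lt_pow_succ_log_self hp.one_lt s
  have hk_le : k ≤ p ^ (e + L) := by
    calc k ≤ s := hks
    _ ≤ p ^ (L + 1) := hsL.le
    _ ≤ p ^ (e + L) := Nat.pow_le_pow_right hp.pos (by omega)
  have h1 := Nat.Prime.emultiplicity_choose_prime_pow hp hk_le hk1
  apply pow_dvd_of_le_emultiplicity
  rw [h1]
  have h2 : multiplicity p k ≤ L := by
    have hd : p ^ multiplicity p k ∣ k := pow_multiplicity_dvd p k
    have hle : p ^ multiplicity p k ≤ s :=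
      le_trans (Nat.le_of_dvd (Nat.pos_of_ne_zero hk1) hd) hks
    exact (Nat.le_log_iff_pow_le hp.one_lt hs).2 hle
  exact_mod_cast (by omega : e ≤ e + L - multiplicity p k)

/-- Converse divisibility: if `p^e ∣ m` and `p^e ∣ choose m (p^j)` for `1 ≤ j ≤ L`,
then `p^(e+L) ∣ m`. -/
lemma pow_dvd_of_choose {p e L m : ℕ} (hp : p.Prime) (he : 1 ≤ e) (hm : m ≠ 0)
    (h1 : p ^ e ∣ m) (h2 : ∀ j, 1 ≤ j → j ≤ L → p ^ e ∣ m.choose (p ^ j)) :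
    p ^ (e + L) ∣ m := by
  rw [hp.pow_dvd_iff_le_factorization hm]
  by_contra hcon
  push_neg at hcon
  set v := m.factorization p with hv
  have hev : e ≤ v := (hp.pow_dvd_iff_le_factorization hm).1 h1
  set j := v - e + 1 with hj
  have hj1 : 1 ≤ j := by omega
  have hjL : j ≤ L := by omega
  have hjv : j ≤ v := by omega
  have hpvm : p ^ v ∣ m := Nat.ordProj_dvd m p
  have hpj_le : p ^ j ≤ m :=
    le_trans (Nat.pow_le_pow_right hp.pos hjv) (Nat.le_of_dvd (Nat.pos_of_ne_zero hm) hpvm)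
  have hdvd := h2 j hj1 hjL
  have hle : (e : ℕ∞) ≤ emultiplicity p (m.choose (p ^ j)) := le_emultiplicity_of_pow_dvd hdvd
  rw [Nat.Prime.emultiplicity_choose hp hpj_le (Nat.lt_succ_self (Nat.log p m))] at hle
  set S := {i ∈ Finset.Ico 1 (Nat.log p m + 1) |
    p ^ i ≤ p ^ j % p ^ i + (m - p ^ j) % p ^ i} with hS
  have hsub : S ⊆ Finset.Ico (j + 1) (v + 1) := by
    intro i hi
    rw [hS, Finset.mem_filter, Finset.mem_Ico] at hi
    obtain ⟨⟨hi1, _⟩, hcar⟩ := hi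
    rw [Finset.mem_Ico]
    constructor
    · by_contra hij
      push_neg at hij
      have hij' : i ≤ j := by omega
      have d1 : p ^ i ∣ p ^ j := pow_dvd_pow p hij'
      have d2 : p ^ i ∣ m := dvd_trans (pow_dvd_pow p (le_trans hij' hjv)) hpvm
      have d3 : p ^ i ∣ m - p ^ j := Nat.dvd_sub d2 d1
      have e1 : p ^ j % p ^ i = 0 := Nat.mod_eq_zero_of_dvd d1
      have e2 : (m - p ^ j) % p ^ i = 0 := Nat.mod_eq_zero_of_dvd d3
      have e3 : 0 < p ^ i := pow_pos hp.pos i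
      omega
    · by_contra hiv
      push_neg at hiv
      have hvi : v < i := by omega
      have hnd : ¬ p ^ i ∣ m := by
        intro hd
        exact absurd ((hp.pow_dvd_iff_le_factorization hm).1 hd) (by omega)
      have hjlt : p ^ j < p ^ i := Nat.pow_lt_pow_right hp.one_lt (by omega)
      have hmod1 : p ^ j % p ^ i = p ^ j := Nat.mod_eq_of_lt hjlt
      set r := m % p ^ i with hr
      have hrv : p ^ v ∣ r := (Nat.dvd_mod_iff (pow_dvd_pow p hvi.le)).2 hpvm
      have hr0 : r ≠ 0 := by
        intro h0
        exact hnd (Nat.dvd_of_mod_eq_zero h0)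
      have hrge : p ^ j ≤ r :=
        le_trans (Nat.pow_le_pow_right hp.pos hjv) (Nat.le_of_dvd (Nat.pos_of_ne_zero hr0) hrv)
      have hrlt : r < p ^ i := Nat.mod_lt m (pow_pos hp.pos i)
      have hmod2 : (m - p ^ j) % p ^ i = r - p ^ j := by
        have hdm : m = p ^ i * (m / p ^ i) + r := (Nat.div_add_mod m (p ^ i)).symm
        have heq : m - p ^ j = p ^ i * (m / p ^ i) + (r - p ^ j) := by omega
        rw [heq, Nat.mul_add_mod]
        exact Nat.mod_eq_of_lt (by omega)
      rw [hmod1, hmod2] at hcar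
      omega
  have hcard : S.card ≤ e - 1 := by
    calc S.card ≤ (Finset.Ico (j + 1) (v + 1)).card := Finset.card_le_card hsub
    _ = v - j := by rw [Nat.card_Ico]; omega
    _ ≤ e - 1 := by omega
  have : (e : ℕ∞) ≤ (S.card : ℕ∞) := hle
  rw [Nat.cast_le] at this
  omega

/-- Powers of the Jordan nilpotent block. -/
lemma jordan_pow {s : ℕ} {R : Type*} [CommRing R] [DecidableEq R] :
    ∀ (k : ℕ) (i j : Fin (s + 1)),
      ((Matrix.of fun i j : Fin (s + 1) => if (j : ℕ) = (i : ℕ) + 1 then (1 : R) else 0) ^ k) i j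
        = if (j : ℕ) = (i : ℕ) + k then 1 else 0 := by
  intro k
  induction k with
  | zero =>
    intro i j
    rw [pow_zero, Matrix.one_apply]
    congr 1
    simp [eq_comm, Fin.ext_iff]
  | succ k ih =>
    intro i j
    rw [pow_succ', Matrix.mul_apply]
    by_cases hi : (i : ℕ) + 1 ≤ s
    · rw [Finset.sum_eq_single_of_mem (⟨(i : ℕ) + 1, by omega⟩ : Fin (s + 1))
        (Finset.mem_univ _)]
      · simp only [Matrix.of_apply, ih, if_true, one_mul]
        congr 1
        simp only [eq_iff_iff]
        omega
      · intro l _ hl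
        have : (l : ℕ) ≠ (i : ℕ) + 1 := fun h => hl (Fin.ext h)
        simp only [Matrix.of_apply, if_neg this, zero_mul]
    · have hii : (i : ℕ) = s := by omega
      rw [Finset.sum_eq_zero, if_neg (by omega)]
      intro l _
      have : (l : ℕ) ≠ (i : ℕ) + 1 := by omega
      simp only [Matrix.of_apply, if_neg this, zero_mul]

/-- A matrix is (upper-triangular) unipotent if it has `1` on the diagonal and
`0` below the diagonal. -/
def IsUnipotent {n : ℕ} {R : Type*} [CommRing R] (M : Matrix (Fin n) (Fin n) R) : Prop :=
  (∀ i, M i i = 1) ∧ ∀ i j : Fin n, (j : ℕ) < (i : ℕ) → M i j = 0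

/-- (Sawin)  For a prime `p`, `s ≥ 1`, and `q = p^e > 1` a power of `p`, the group of
upper-triangular unipotent `(s+1)×(s+1)` matrices over `ℤ/q` has exponent
`q * p^⌊log_p s⌋`: this number kills every unipotent matrix, and it divides every
positive integer `m` such that `M^m = 1` for all unipotent `M`. -/
theorem exponent_unipotent (p s e q : ℕ) (hp : p.Prime) (hs : 1 ≤ s)
    (he : 1 ≤ e) (hq : q = p ^ e) :
    (∀ M : Matrix (Fin (s + 1)) (Fin (s + 1)) (ZMod q),
        IsUnipotent M → M ^ (q * p ^ Nat.log p s) = 1) ∧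
    (∀ m : ℕ, 0 < m →
        (∀ M : Matrix (Fin (s + 1)) (Fin (s + 1)) (ZMod q),
          IsUnipotent M → M ^ m = 1) →
        q * p ^ Nat.log p s ∣ m) := by
  have hqcast : ((q : ℕ) : Matrix (Fin (s+1)) (Fin (s+1)) (ZMod q)) = 0 := by
    subst hq
    exact CharP.cast_eq_zero _ _
  have hcast0 : ∀ c : ℕ, q ∣ c → ((c : ℕ) : Matrix (Fin (s+1)) (Fin (s+1)) (ZMod q)) = 0 := by
    intro c ⟨d, hd⟩
    rw [hd]
    push_cast
    rw [hqcast, zero_mul]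
  set L := Nat.log p s with hL
  constructor
  · -- part 1
    intro M hM
    obtain ⟨hdiag, hlow⟩ := hM
    set N := M - 1 with hN
    have hNlow : ∀ i j : Fin (s+1), (j : ℕ) ≤ (i : ℕ) → N i j = 0 := by
      intro i j hij
      rcases eq_or_lt_of_le hij with h | h
      · have hji : j = i := Fin.ext h
        subst hji
        simp [hN, Matrix.sub_apply, hdiag j]
      · have h1 : (1 : Matrix (Fin (s+1)) (Fin (s+1)) (ZMod q)) i j = 0 :=
          Matrix.one_apply_ne (by intro hh; subst hh; omega)
        simp [hN, Matrix.sub_apply, hlow i j h, h1]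
    have hMN : M = N + 1 := by rw [hN]; abel
    have hNnil : N ^ (s + 1) = 0 := by
      ext i j
      rw [Matrix.zero_apply]
      exact strictUpper_pow hNlow (s + 1) i j (by omega)
    rw [hMN, add_one_pow_ring]
    rw [Finset.sum_eq_single_of_mem 0 (Finset.mem_range.2 (by positivity))]
    · simp
    · intro k _ hk0
      rcases le_or_gt k s with hks | hks
      · have hdvd : q ∣ ((q * p ^ L).choose k) := by
          rw [hq, ← pow_add]
          exact dvd_choose_pp hp he (by omega) hk0 hks
        rw [← Nat.cast_smul_eq_nsmul (ZMod q), show (((q * p ^ L).choose k : ℕ) : ZMod q) = 0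
          from (ZMod.natCast_eq_zero_iff _ _).2 hdvd, zero_smul]
      · have : N ^ k = 0 := pow_eq_zero_of_le (by omega) hNnil
        rw [this, smul_zero]
  · -- part 2
    intro m hm0 hall
    set J := (Matrix.of fun i j : Fin (s + 1) =>
      if (j : ℕ) = (i : ℕ) + 1 then (1 : ZMod q) else 0) with hJ
    have hJuni : IsUnipotent (J + 1) := by
      constructor
      · intro i
        simp [hJ, Matrix.add_apply, Matrix.one_apply]
      · intro i j hij
        have h1 : (1 : Matrix (Fin (s+1)) (Fin (s+1)) (ZMod q)) i j =
            0 := Matrix.one_apply_ne (fun hh => by rw [hh] at hij; omega)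
        simp [hJ, Matrix.add_apply, h1, show (j:ℕ) ≠ (i:ℕ)+1 by omega]
    have hpow := hall (J + 1) hJuni
    rw [add_one_pow_ring] at hpow
    have hdvd : ∀ k : ℕ, 1 ≤ k → k ≤ s → q ∣ m.choose k := by
      intro k hk1 hks
      rcases le_or_gt k m with hkm | hkm
      · have := congrFun (congrFun hpow 0) ⟨k, by omega⟩
        rw [Matrix.sum_apply] at this
        rw [hJ] at this
        simp only [Matrix.smul_apply, jordan_pow, Fin.val_mk, Fin.val_zero, zero_add] at this
        have hone : (1 : Matrix (Fin (s+1)) (Fin (s+1)) (ZMod q)) 0 ⟨k, by omega⟩ = 0 :=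
          Matrix.one_apply_ne (by simp [Fin.ext_iff]; omega)
        rw [hone] at this
        rw [← ZMod.natCast_eq_zero_iff]
        have hsum : ∑ x ∈ Finset.range (m + 1),
            (m.choose x) • (if k = x then (1 : ZMod q) else 0) = (m.choose k : ZMod q) := by
          rw [Finset.sum_congr rfl (g := fun x => if k = x then (m.choose x : ZMod q) else 0)
            (fun x _ => by by_cases hkx : k = x <;> simp [hkx])]
          rw [Finset.sum_ite_eq]
          simp [Finset.mem_range, Nat.lt_succ_of_le hkm]
        rw [hsum] at this
        exact this
      · rw [Nat.choose_eq_zero_of_lt hkm]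
        exact dvd_zero q
    have h1 : p ^ e ∣ m := by
      have := hdvd 1 le_rfl hs
      rwa [Nat.choose_one_right, hq] at this
    have h2 : ∀ j, 1 ≤ j → j ≤ L → p ^ e ∣ m.choose (p ^ j) := by
      intro j hj1 hjL
      rw [← hq]
      apply hdvd
      · exact Nat.one_le_pow _ _ hp.pos
      · calc p ^ j ≤ p ^ L := Nat.pow_le_pow_right hp.pos hjL
          _ ≤ s := Nat.pow_log_le_self p (by omega)
    have := pow_dvd_of_choose hp he (by omega) h1 h2
    rwa [hq, ← pow_add]
end

section
/- Let X = {x}, p a prime, and s ≥ 2. Then Sh_ℤ(X)_indec,s ⊗ (ℤ/p) is isomorphic to ℤ/p if s is a power of p, and is zero otherwise. -/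
/-- The multiset of all shuffles (interleavings) of two words. -/
def shuffles {α : Type*} : List α → List α → Multiset (List α)
  | [], v => {v}
  | a :: u, [] => {a :: u}
  | a :: u, b :: v =>
      ((shuffles u (b :: v)).map (a :: ·)) + ((shuffles (a :: u) v).map (b :: ·))
termination_by u v => u.length + v.length

/-- The shuffle product of two words, as an element of the free `ℤ`-module `ℤ⟨X⟩`. -/
noncomputable def sh {α : Type*} (u v : List α) : List α →₀ ℤ :=
  ((shuffles u v).map fun w => Finsupp.single w (1 : ℤ)).sum

/-- The submodule of weakly decomposable elements of the shuffle algebra `Sh_ℤ(X)`: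
the `ℤ`-submodule generated by all shuffle products of pairs of nonempty words. -/
noncomputable def weaklyDec (α : Type*) : Submodule ℤ (List α →₀ ℤ) :=
  Submodule.span ℤ {f | ∃ u v : List α, u ≠ [] ∧ v ≠ [] ∧ f = sh u v}

/-- The degree-`s` homogeneous component of `Sh_ℤ(X)`: the span of the words of length `s`. -/
noncomputable def degComp (α : Type*) (s : ℕ) : Submodule ℤ (List α →₀ ℤ) :=
  Submodule.span ℤ {f | ∃ w : List α, w.length = s ∧ f = Finsupp.single w (1 : ℤ)}

/-- The degree-`s` component of the indecomposable quotient `Sh_ℤ(X)_indec`,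
realized as the quotient of the degree-`s` component by its weakly decomposable part. -/
noncomputable abbrev shIndec (α : Type*) (s : ℕ) :=
  degComp α s ⧸ Submodule.comap (degComp α s).subtype (weaklyDec α ⊓ degComp α s)

/-! ### Auxiliary results: counting shuffles -/

lemma shuffles_card {α : Type*} (u v : List α) :
    Multiset.card (shuffles u v) = (u.length + v.length).choose u.length := by
  induction u, v using shuffles.induct with
  | case1 v => simp [shuffles]
  | case2 a u => simp [shuffles]
  | case3 a u b v ih1 ih2 =>
      simp only [shuffles, Multiset.card_add, Multiset.card_map, ih1, ih2, List.length_cons]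
      rw [show u.length + 1 + (v.length + 1) = (u.length + (v.length+1)) + 1 by ring,
        Nat.choose_succ_succ]
      congr 1
      · congr 1; omega

lemma shuffles_len {α : Type*} (u v : List α) :
    ∀ w ∈ shuffles u v, w.length = u.length + v.length := by
  induction u, v using shuffles.induct with
  | case1 v => simp [shuffles]
  | case2 a u => simp [shuffles]
  | case3 a u b v ih1 ih2 =>
      intro w hw
      simp only [shuffles, Multiset.mem_add, Multiset.mem_map] at hw
      rcases hw with ⟨w', hw', rfl⟩ | ⟨w', hw', rfl⟩
      · simp [ih1 w' hw']; omega
      · simp [ih2 w' hw']; omega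

lemma list_unit_eq (w : List Unit) : w = List.replicate w.length () := by
  apply List.eq_replicate_length.2; intro b _; rfl

lemma sh_unit (u v : List Unit) :
    sh u v = ((u.length + v.length).choose u.length : ℤ) •
      Finsupp.single (List.replicate (u.length + v.length) ()) (1 : ℤ) := by
  unfold sh
  have hmap : (shuffles u v).map (fun w => Finsupp.single w (1:ℤ)) =
      (shuffles u v).map
        (fun _ => Finsupp.single (List.replicate (u.length + v.length) ()) (1:ℤ)) := by
    apply Multiset.map_congr rfl
    intro w hw
    rw [← shuffles_len u v w hw, ← list_unit_eq]
  rw [hmap, Multiset.map_const', Multiset.sum_replicate, shuffles_card]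
  simp

/-! ### The binomial ideal and the structure of the degree-`s` component -/

/-- The ideal of `ℤ` generated by the interior binomial coefficients of row `s`. -/
noncomputable def binIdeal (s : ℕ) : Ideal ℤ :=
  Ideal.span ((fun i => (s.choose i : ℤ)) '' Set.Ioo 0 s)

section Core
variable (s : ℕ)

noncomputable abbrev eGen : List Unit →₀ ℤ := Finsupp.single (List.replicate s ()) 1

lemma degComp_unit_eq : degComp Unit s = Submodule.span ℤ {eGen s} := by
  unfold degComp
  congr 1
  ext f
  constructor
  · rintro ⟨w, hw, rfl⟩
    have : w = List.replicate s () := by rw [list_unit_eq w, hw]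
    simp [this, eGen]
  · rintro rfl
    exact ⟨List.replicate s (), List.length_replicate, rfl⟩

lemma eGen_mem : eGen s ∈ degComp Unit s := by
  rw [degComp_unit_eq]; exact Submodule.mem_span_singleton_self _

lemma weaklyDec_apply (f : List Unit →₀ ℤ) (hf : f ∈ weaklyDec Unit) :
    f (List.replicate s ()) ∈ binIdeal s := by
  refine Submodule.span_induction ?_ ?_ ?_ ?_ hf
  · rintro g ⟨u, v, hu, hv, rfl⟩
    rw [sh_unit]
    by_cases hn : u.length + v.length = s
    · rw [Finsupp.smul_apply, hn, Finsupp.single_eq_same, smul_eq_mul, mul_one]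
      refine Ideal.subset_span ⟨u.length, ?_, rfl⟩
      have hu' : 0 < u.length := List.length_pos_iff.2 hu
      have hv' : 0 < v.length := List.length_pos_iff.2 hv
      exact ⟨hu', by omega⟩
    · rw [Finsupp.smul_apply, Finsupp.single_apply_eq_zero.2, smul_zero]
      · exact Ideal.zero_mem _
      · intro h
        exact absurd (by simpa using (congrArg List.length h).symm) hn
  · exact Ideal.zero_mem _
  · intro x y _ _ hx hy; rw [Finsupp.add_apply]; exact Ideal.add_mem _ hx hy
  · intro c x _ hx; rw [Finsupp.smul_apply]; exact Ideal.mul_mem_left _ _ hx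

/-- Evaluation at the length-`s` word, as a linear map on the degree component. -/
noncomputable def evalMap : degComp Unit s →ₗ[ℤ] ℤ :=
  (Finsupp.lapply (List.replicate s ())).comp (degComp Unit s).subtype

lemma mem_degComp_eq (f : List Unit →₀ ℤ) (hf : f ∈ degComp Unit s) :
    f = f (List.replicate s ()) • eGen s := by
  rw [degComp_unit_eq] at hf
  obtain ⟨c, hc⟩ := Submodule.mem_span_singleton.1 hf
  have : f (List.replicate s ()) = c := by
    rw [← hc]; simp [eGen]
  rw [this, hc]

lemma evalMap_bijective : Function.Bijective (evalMap s) := by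
  constructor
  · intro f g hfg
    have h : f.1 (List.replicate s ()) = g.1 (List.replicate s ()) := by
      simpa [evalMap] using hfg
    ext1
    rw [mem_degComp_eq s f.1 f.2, mem_degComp_eq s g.1 g.2, h]
  · intro c
    refine ⟨⟨c • eGen s, Submodule.smul_mem _ _ (eGen_mem s)⟩, ?_⟩
    simp [evalMap, eGen]

noncomputable def evalEquiv : degComp Unit s ≃ₗ[ℤ] ℤ :=
  LinearEquiv.ofBijective (evalMap s) (evalMap_bijective s)

lemma map_evalEquiv (hs : 2 ≤ s) :
    (Submodule.comap (degComp Unit s).subtype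
        (weaklyDec Unit ⊓ degComp Unit s)).map ((evalEquiv s) : degComp Unit s →ₗ[ℤ] ℤ)
      = binIdeal s := by
  apply le_antisymm
  · rintro x ⟨f, hf, rfl⟩
    exact weaklyDec_apply s f.1 hf.1
  · unfold binIdeal
    rw [Ideal.span_le]
    rintro x ⟨i, hi, rfl⟩
    obtain ⟨hi1, hi2⟩ := hi
    have hf : (s.choose i : ℤ) • eGen s ∈ weaklyDec Unit := by
      have := sh_unit (List.replicate i ()) (List.replicate (s - i) ())
      simp only [List.length_replicate] at this
      have hlen : i + (s - i) = s := by omega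
      rw [hlen] at this
      refine Submodule.subset_span
        ⟨List.replicate i (), List.replicate (s - i) (), ?_, ?_, this.symm⟩
      · intro h; apply_fun List.length at h; simp at h; omega
      · intro h; apply_fun List.length at h; simp at h; omega
    have hd : (s.choose i : ℤ) • eGen s ∈ degComp Unit s :=
      Submodule.smul_mem _ _ (eGen_mem s)
    refine ⟨⟨(s.choose i : ℤ) • eGen s, hd⟩, ⟨hf, hd⟩, ?_⟩
    show evalMap s _ = _
    simp [evalMap, eGen]

/-- The degree-`s` indecomposables over one letter are `ℤ` modulo the binomial ideal. -/
noncomputable def indecEquiv (hs : 2 ≤ s) : shIndec Unit s ≃ₗ[ℤ] ℤ ⧸ binIdeal s :=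
  Submodule.Quotient.equiv _ _ (evalEquiv s) (map_evalEquiv s hs)

end Core

/-! ### Number-theoretic facts about the binomial ideal -/

lemma lucas_aux {p : ℕ} (hp : p.Prime) (m : ℕ) :
    ∀ a : ℕ, (m * p ^ a).choose (p ^ a) ≡ m [MOD p] := by
  haveI : Fact p.Prime := ⟨hp⟩
  intro a
  induction a with
  | zero => simpa [Nat.choose_one_right] using Nat.ModEq.refl m
  | succ a ih =>
      have key := Choose.choose_modEq_choose_mod_mul_choose_div_nat
        (n := m * p ^ (a + 1)) (k := p ^ (a + 1)) (p := p)
      have h1 : m * p ^ (a + 1) % p = 0 := by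
        rw [pow_succ, ← mul_assoc, Nat.mul_mod_left]
      have h2 : p ^ (a + 1) % p = 0 := by
        rw [pow_succ, Nat.mul_mod_left]
      have h3 : m * p ^ (a + 1) / p = m * p ^ a := by
        rw [pow_succ, ← mul_assoc, Nat.mul_div_cancel _ hp.pos]
      have h4 : p ^ (a + 1) / p = p ^ a := by
        rw [pow_succ, Nat.mul_div_cancel _ hp.pos]
      rw [h1, h2, h3, h4] at key
      have key' : (m * p ^ (a + 1)).choose (p ^ (a + 1)) ≡
          (m * p ^ a).choose (p ^ a) [MOD p] := by
        simpa using key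
      exact key'.trans ih

lemma exists_choose_not_dvd {p s : ℕ} (hp : p.Prime) (hs : 2 ≤ s)
    (hnp : ¬ ∃ k, s = p ^ k) : ∃ i, 0 < i ∧ i < s ∧ ¬ p ∣ s.choose i := by
  have hs0 : s ≠ 0 := by omega
  set a := s.factorization p with ha
  set m := s / p ^ a with hm
  have hdvd : p ^ a ∣ s := Nat.ordProj_dvd s p
  have hsm : s = p ^ a * m := (Nat.mul_div_cancel' hdvd).symm
  have hpm : ¬ p ∣ m := Nat.not_dvd_ordCompl hp hs0
  have hm1 : m ≠ 1 := by
    intro h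
    exact hnp ⟨a, by rw [hsm, h, mul_one]⟩
  have hm0 : m ≠ 0 := by
    intro h; rw [hsm, h, mul_zero] at hs; omega
  have hm2 : 2 ≤ m := (Nat.two_le_iff m).2 ⟨hm0, hm1⟩
  have hpa : 0 < p ^ a := pow_pos hp.pos a
  refine ⟨p ^ a, hpa, ?_, ?_⟩
  · have hne : p ^ a ≠ s := fun h => hnp ⟨a, h.symm⟩
    exact lt_of_le_of_ne (Nat.le_of_dvd (by omega) hdvd) hne
  · intro hdvdc
    have hmod : s.choose (p ^ a) ≡ m [MOD p] := by
      rw [hsm, mul_comm]; exact lucas_aux hp m a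
    have : p ∣ m := by
      have h0 : s.choose (p ^ a) ≡ 0 [MOD p] := (Nat.modEq_zero_iff_dvd).2 hdvdc
      exact (Nat.modEq_zero_iff_dvd).1 (hmod.symm.trans h0)
    exact hpm this

lemma binIdeal_le_span_p {p s k : ℕ} (hp : p.Prime) (hs : 2 ≤ s) (hk : s = p ^ k) :
    binIdeal s ≤ Ideal.span {(p : ℤ)} := by
  rw [binIdeal, Ideal.span_le]
  rintro x ⟨i, ⟨hi1, hi2⟩, rfl⟩
  rw [SetLike.mem_coe, Ideal.mem_span_singleton]
  have hd : p ∣ s.choose i := by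
    subst hk
    exact Nat.Prime.dvd_choose_pow hp (by omega) (by omega)
  show (p : ℤ) ∣ (s.choose i : ℤ)
  exact Int.natCast_dvd_natCast.2 hd

lemma binIdeal_sup_eq_top {p s : ℕ} (hp : p.Prime) (hs : 2 ≤ s)
    (hnp : ¬ ∃ k, s = p ^ k) : binIdeal s ⊔ Ideal.span {(p : ℤ)} = ⊤ := by
  obtain ⟨i, hi0, his, hnd⟩ := exists_choose_not_dvd hp hs hnp
  rw [Ideal.eq_top_iff_one]
  have hcop : IsCoprime (s.choose i : ℤ) (p : ℤ) :=
    Nat.isCoprime_iff_coprime.2 ((hp.coprime_iff_not_dvd.2 hnd).symm)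
  obtain ⟨a, b, hab⟩ := hcop
  rw [← hab]
  refine Submodule.add_mem _ ?_ ?_
  · exact Submodule.mem_sup_left
      (Ideal.mul_mem_left _ a (Ideal.subset_span ⟨i, ⟨hi0, his⟩, rfl⟩))
  · exact Submodule.mem_sup_right (Ideal.mul_mem_left _ b (Ideal.subset_span rfl))

/-! ### The tensor product computation -/

lemma smul_top_eq_map_sup (J P : Ideal ℤ) :
    (P • (⊤ : Submodule ℤ (ℤ ⧸ J))) = Submodule.map J.mkQ (J ⊔ P) := by
  calc P • (⊤ : Submodule ℤ (ℤ ⧸ J)) = P • (Submodule.map J.mkQ ⊤) := by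
        rw [Submodule.map_top, Submodule.range_mkQ]
    _ = Submodule.map J.mkQ (P • ⊤) := (Submodule.map_smul'' P ⊤ J.mkQ).symm
    _ = Submodule.map J.mkQ P := by
        rw [show P • (⊤ : Submodule ℤ ℤ) = P from by
          rw [← Ideal.one_eq_top, Ideal.smul_eq_mul, mul_one]]
    _ = Submodule.map J.mkQ (J ⊔ P) := by
        rw [Submodule.map_sup, Submodule.mkQ_map_self, bot_sup_eq]

noncomputable def tensorEquivQuotSup (p s : ℕ) (hs : 2 ≤ s) :
    TensorProduct ℤ (ZMod p) (shIndec Unit s) ≃ₗ[ℤ]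
      ℤ ⧸ (binIdeal s ⊔ Ideal.span {(p : ℤ)}) :=
  let P : Ideal ℤ := Ideal.span {(p : ℤ)}
  let zEq : ZMod p ≃ₗ[ℤ] ℤ ⧸ P :=
    (Int.quotientSpanNatEquivZMod p).symm.toAddEquiv.toIntLinearEquiv
  (TensorProduct.congr zEq (indecEquiv s hs)) ≪≫ₗ
    (TensorProduct.quotTensorEquivQuotSMul (ℤ ⧸ binIdeal s) P) ≪≫ₗ
    (Submodule.quotEquivOfEq _ _ (smul_top_eq_map_sup (binIdeal s) P)) ≪≫ₗ
    (Submodule.quotientQuotientEquivQuotient (binIdeal s) (binIdeal s ⊔ P) le_sup_left)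

/-- For the one-letter alphabet `X = {x}`, a prime `p` and `s ≥ 2`, the tensor product
`Sh_ℤ(X)_indec,s ⊗ ℤ/p` is isomorphic to `ℤ/p` if `s` is a power of `p`, and is zero
otherwise. -/
theorem oneLetter_indec_tensor (p s : ℕ) (hp : p.Prime) (hs : 2 ≤ s) :
    ((∃ k, s = p ^ k) →
      Nonempty (TensorProduct ℤ (ZMod p) (shIndec Unit s) ≃ₗ[ℤ] ZMod p)) ∧
    (¬ (∃ k, s = p ^ k) →
      Subsingleton (TensorProduct ℤ (ZMod p) (shIndec Unit s))) := by
  constructor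
  · rintro ⟨k, hk⟩
    have hsup : binIdeal s ⊔ Ideal.span {(p : ℤ)} = Ideal.span {(p : ℤ)} :=
      sup_eq_right.2 (binIdeal_le_span_p hp hs hk)
    exact ⟨tensorEquivQuotSup p s hs ≪≫ₗ Submodule.quotEquivOfEq _ _ hsup ≪≫ₗ
      (Int.quotientSpanNatEquivZMod p).toAddEquiv.toIntLinearEquiv⟩
  · intro hnp
    have hsup := binIdeal_sup_eq_top hp hs hnp
    haveI : Subsingleton (ℤ ⧸ (binIdeal s ⊔ Ideal.span {(p : ℤ)})) :=
      Submodule.Quotient.subsingleton_iff.2 hsup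
    exact (tensorEquivQuotSup p s hs).toEquiv.subsingleton
end

section
/- Every nonempty word w over a totally ordered alphabet X can be written uniquely as a concatenation w = u_1^{i_1} ⋯ u_k^{i_k} of Lyndon words u_1 > ⋯ > u_k with i_1, …, i_k ≥ 1. -/
/-- A nonempty word over a totally ordered alphabet is a Lyndon word if it is
lexicographically strictly smaller than each of its nontrivial proper suffixes. -/
def IsLyndon {α : Type*} [LinearOrder α] (w : List α) : Prop :=
  w ≠ [] ∧ ∀ i, 0 < i → i < w.length → w < w.drop i

section Aux

variable {α : Type*} [LinearOrder α]

private lemma lex_not_append_lt_self (p t : List α) : ¬ (p ++ t) < p := by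
  show ¬ List.Lex (· < ·) (p ++ t) p
  induction p with
  | nil => exact List.not_lex_nil
  | cons a p ih => simpa [List.cons_lex_cons_iff] using ih

private lemma le_of_prefix {p q : List α} (h : p <+: q) : p ≤ q := by
  obtain ⟨t, rfl⟩ := h
  exact le_of_not_gt (lex_not_append_lt_self p t)

private lemma append_lt_append_left {u x y : List α} (h : x < y) : u ++ x < u ++ y :=
  List.Lex.append_left _ h u

private lemma lt_append_of_lt_not_prefix :
    ∀ {u v : List α}, List.Lex (· < ·) u v → ¬ u <+: v →
      ∀ x y : List α, List.Lex (· < ·) (u ++ x) (v ++ y)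
  | _, _, List.Lex.nil, hp, _, _ => absurd List.nil_prefix hp
  | _, _, List.Lex.rel h, _, _, _ => List.Lex.rel h
  | _, _, @List.Lex.cons _ _ a l₁ l₂ h, hp, x, y =>
    List.Lex.cons (lt_append_of_lt_not_prefix h
      (fun hc => hp (List.cons_prefix_cons.mpr ⟨rfl, hc⟩)) x y)

private lemma lt_append_of_lt_not_prefix' {u v : List α} (h : u < v) (hp : ¬ u <+: v)
    (x y : List α) : u ++ x < v ++ y :=
  lt_append_of_lt_not_prefix h hp x y

/-- Merging: if `u < v` are Lyndon, so is `u ++ v`. -/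
private lemma isLyndon_append {u v : List α} (hu : IsLyndon u) (hv : IsLyndon v)
    (huv : u < v) : IsLyndon (u ++ v) := by
  have hune : u ≠ [] := hu.1
  have hvne : v ≠ [] := hv.1
  have key : u ++ v < v := by
    by_cases hp : u <+: v
    · obtain ⟨t, rfl⟩ := hp
      have ht : t ≠ [] := by
        rintro rfl
        rw [List.append_nil] at huv
        exact lt_irrefl _ huv
      have hlt : u ++ t < t := by
        have := hv.2 u.length (by simpa [List.length_pos_iff] using hune)
          (by simp [List.length_pos_iff.mpr ht])
        simpa [List.drop_left] using this
      exact append_lt_append_left hlt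
    · have := lt_append_of_lt_not_prefix' huv hp v []
      simpa using this
  refine ⟨by simp [hune], fun i hi hilen => ?_⟩
  rcases lt_trichotomy i u.length with hlt | heq | hgt
  · -- suffix starts inside u
    have hdrop : (u ++ v).drop i = u.drop i ++ v :=
      List.drop_append_of_le_length (le_of_lt hlt)
    have hu_lt : u < u.drop i := hu.2 i hi hlt
    have hnp : ¬ u <+: u.drop i := by
      intro hc
      have := hc.length_le
      rw [List.length_drop] at this
      omega
    have : u ++ v < u.drop i ++ v := lt_append_of_lt_not_prefix' hu_lt hnp v v
    rwa [hdrop]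
  · rw [heq, List.drop_left]
    exact key
  · -- suffix inside v
    have hdrop : (u ++ v).drop i = v.drop (i - u.length) := by
      rw [List.drop_append, List.drop_eq_nil_of_le (le_of_lt hgt),
        List.nil_append]
    have hv_lt : v < v.drop (i - u.length) := by
      refine hv.2 _ (by omega) ?_
      rw [List.length_append] at hilen
      omega
    rw [hdrop]
    exact lt_trans key hv_lt

private lemma isLyndon_singleton (a : α) : IsLyndon [a] :=
  ⟨by simp, fun i hi hilen => by simp at hilen; omega⟩

/-- Existence step: any list of Lyndon words can be merged into a non-increasing
list of Lyndon words with the same flatten, without increasing the length. -/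
private lemma exists_chain :
    ∀ (n : ℕ) (l : List (List α)), l.length ≤ n → (∀ x ∈ l, IsLyndon x) →
      ∃ m : List (List α), (∀ x ∈ m, IsLyndon x) ∧
        List.Chain' (fun a b => b ≤ a) m ∧ m.flatten = l.flatten ∧ m.length ≤ l.length := by
  intro n
  induction n with
  | zero =>
    intro l hl _
    rw [Nat.le_zero, List.length_eq_zero_iff] at hl
    exact ⟨[], by simp [hl, List.Chain']⟩
  | succ n ih =>
    intro l hl hly
    match l with
    | [] => exact ⟨[], by simp [List.Chain']⟩
    | [a] => exact ⟨[a], by simpa [List.Chain'] using hly⟩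
    | a :: b :: rest =>
      have hbl : (b :: rest).length ≤ n := by simpa using hl
      obtain ⟨m, hmly, hmch, hmfl, hmlen⟩ := ih (b :: rest) hbl
        (fun x hx => hly x (List.mem_cons_of_mem _ hx))
      match m, hmly, hmch, hmfl, hmlen with
      | [], _, _, hmfl, _ =>
        exfalso
        have : b ≠ [] := (hly b (by simp)).1
        simp at hmfl
        exact this hmfl.1
      | c :: m', hmly, hmch, hmfl, hmlen =>
        by_cases hca : c ≤ a
        · refine ⟨a :: c :: m', ?_, ?_, ?_, ?_⟩
          · intro x hx
            rcases List.mem_cons.mp hx with rfl | hx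
            · exact hly x (by simp)
            · exact hmly x hx
          · exact List.isChain_cons_cons.mpr ⟨hca, hmch⟩
          · simp only [List.flatten_cons] at hmfl ⊢
            rw [hmfl]
          · simpa using hmlen
        · push_neg at hca
          have haly : IsLyndon a := hly a (by simp)
          have hcly : IsLyndon c := hmly c (by simp)
          have hacly : IsLyndon (a ++ c) := isLyndon_append haly hcly hca
          have hlen' : ((a ++ c) :: m').length ≤ n := by
            simpa using hmlen.trans hbl
          obtain ⟨m'', h1, h2, h3, h4⟩ := ih ((a ++ c) :: m') hlen'
            (fun x hx => by
              rcases List.mem_cons.mp hx with rfl | hx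
              · exact hacly
              · exact hmly x (List.mem_cons_of_mem _ hx))
          refine ⟨m'', h1, h2, ?_, ?_⟩
          · rw [h3]
            simp only [List.flatten_cons, List.append_assoc]
            simp only [List.flatten_cons] at hmfl
            rw [hmfl]
          · simp only [List.length_cons] at h4 hmlen ⊢
            omega

/-- Splitting a nonempty prefix of a flatten. -/
private lemma prefix_flatten_split :
    ∀ (l : List (List α)) (s : List α), s ≠ [] → s <+: l.flatten →
      ∃ l₁ x l₂ p, l = l₁ ++ x :: l₂ ∧ p ≠ [] ∧ p <+: x ∧ s = l₁.flatten ++ p := by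
  intro l
  induction l with
  | nil =>
    intro s hs hp
    simp at hp
    exact absurd hp hs
  | cons v t ih =>
    intro s hs hp
    by_cases hlen : s.length ≤ v.length
    · have hsv : s <+: v := by
        refine List.prefix_of_prefix_length_le hp ?_ hlen
        · simpa using List.prefix_append v t.flatten
      exact ⟨[], v, t, s, by simp, hs, hsv, by simp⟩
    · push_neg at hlen
      have hvs : v <+: s := by
        refine List.prefix_of_prefix_length_le ?_ hp (le_of_lt hlen)
        · simpa using List.prefix_append v t.flatten
      obtain ⟨s', rfl⟩ := hvs
      have hs'ne : s' ≠ [] := by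
        rintro rfl
        simp at hlen
      have hs'p : s' <+: t.flatten := by
        have : v ++ s' <+: v ++ t.flatten := by simpa using hp
        exact (List.prefix_append_right_inj v).mp this
      obtain ⟨l₁, x, l₂, p, rfl, hpne, hpx, hs'⟩ := ih s' hs'ne hs'p
      exact ⟨v :: l₁, x, l₂, p, by simp, hpne, hpx, by simp [hs', List.append_assoc]⟩

private lemma trans_ge : Transitive (fun a b : List α => b ≤ a) :=
  fun _ _ _ h h' => h'.trans h

/-- In a non-increasing Lyndon factorization, the first factor is at least as long
as any Lyndon prefix. -/
private lemma length_le_head {v : List α} {t : List (List α)} {u : List α}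
    (hly : ∀ x ∈ v :: t, IsLyndon x) (hch : List.Chain' (fun a b => b ≤ a) (v :: t))
    (hu : IsLyndon u) (hp : u <+: (v :: t).flatten) : u.length ≤ v.length := by
  by_contra hgt
  push_neg at hgt
  obtain ⟨l₁, x, l₂, p, heq, hpne, hpx, hupe⟩ :=
    prefix_flatten_split (v :: t) u hu.1 hp
  match l₁, heq, hupe with
  | [], heq, hupe =>
    simp at heq hupe
    obtain ⟨rfl, rfl⟩ := heq
    subst hupe
    exact absurd hpx.length_le (by omega)
  | w :: l₁', heq, hupe =>
    have heq' : v = w ∧ t = l₁' ++ x :: l₂ := by simpa using heq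
    obtain ⟨rfl, ht⟩ := heq'
    -- v <+: u
    have hvu : v <+: u := by
      rw [hupe]
      exact (List.prefix_append v l₁'.flatten).trans (by simp [List.append_assoc])
    have hvne : v ≠ [] := (hly v (by simp)).1
    have hflne : 0 < ((v :: l₁').flatten).length := by
      simp only [List.flatten_cons, List.length_append]
      have := List.length_pos_iff.mpr hvne
      omega
    -- p is a proper suffix of u
    have hpdrop : p = u.drop ((v :: l₁').flatten).length := by
      rw [hupe, List.drop_left]
    have hplen : ((v :: l₁').flatten).length < u.length := by
      rw [hupe, List.length_append]
      have : 0 < p.length := List.length_pos_iff.mpr hpne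
      omega
    have hup : u < p := by
      rw [hpdrop]
      exact hu.2 _ hflne hplen
    -- p ≤ x
    have hpxle : p ≤ x := le_of_prefix hpx
    -- x ≤ v
    have hxv : x ≤ v := by
      have hmem : x ∈ v :: t := by
        rw [List.mem_cons, ht]
        exact Or.inr (List.mem_append_right _ (by simp))
      rcases List.mem_cons.mp hmem with rfl | hxt
      · exact le_rfl
      · have hpw := (List.isChain_iff_pairwise (R := fun a b : List α => b ≤ a)).mp hch
        exact (List.pairwise_cons.mp hpw).1 x hxt
    -- v ≤ u
    have hvule : v ≤ u := le_of_prefix hvu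
    exact absurd (lt_of_lt_of_le hup (hpxle.trans (hxv.trans hvule))) (lt_irrefl u)

private lemma flatten_eq_nil_iff {l : List (List α)} (hly : ∀ x ∈ l, IsLyndon x) :
    l.flatten = [] → l = [] := by
  intro h
  match l with
  | [] => rfl
  | v :: t =>
    exfalso
    simp at h
    exact (hly v (by simp)).1 h.1

/-- Uniqueness of the factorization. -/
private lemma unique_chain :
    ∀ (n : ℕ) (l₁ l₂ : List (List α)), l₁.flatten.length ≤ n →
      (∀ x ∈ l₁, IsLyndon x) → List.Chain' (fun a b => b ≤ a) l₁ →
      (∀ x ∈ l₂, IsLyndon x) → List.Chain' (fun a b => b ≤ a) l₂ →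
      l₁.flatten = l₂.flatten → l₁ = l₂ := by
  intro n
  induction n with
  | zero =>
    intro l₁ l₂ hn h1 _ h2 _ hfl
    have hl1 : l₁.flatten = [] := List.length_eq_zero_iff.mp (Nat.le_zero.mp hn)
    have hl2 : l₂.flatten = [] := by rw [← hfl]; exact hl1
    rw [flatten_eq_nil_iff h1 hl1, flatten_eq_nil_iff h2 hl2]
  | succ n ih =>
    intro l₁ l₂ hn h1 hc1 h2 hc2 hfl
    match l₁, l₂ with
    | [], l₂ =>
      have : l₂.flatten = [] := by rw [← hfl]; rfl
      rw [flatten_eq_nil_iff h2 this]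
    | v :: t, [] =>
      exfalso
      have : (v :: t).flatten = [] := by rw [hfl]; rfl
      exact absurd (flatten_eq_nil_iff h1 this) (by simp)
    | u :: t₁, v :: t₂ =>
      have hu : IsLyndon u := h1 u (by simp)
      have hv : IsLyndon v := h2 v (by simp)
      have hupre : u <+: (v :: t₂).flatten := by
        rw [← hfl]
        exact List.prefix_append u t₁.flatten
      have hvpre : v <+: (u :: t₁).flatten := by
        rw [hfl]
        exact List.prefix_append v t₂.flatten
      have h₁ : u.length ≤ v.length := length_le_head h2 hc2 hu hupre
      have h₂ : v.length ≤ u.length := length_le_head h1 hc1 hv hvpre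
      have huv : u = v := by
        have : u <+: v := List.prefix_of_prefix_length_le hupre
          (List.prefix_append v t₂.flatten) h₁
        exact this.eq_of_length (le_antisymm h₁ h₂)
      subst huv
      have htfl : t₁.flatten = t₂.flatten := by
        simp only [List.flatten_cons] at hfl
        exact List.append_cancel_left hfl
      have hune : 0 < u.length := List.length_pos_iff.mpr hu.1
      have hlen : t₁.flatten.length ≤ n := by
        simp only [List.flatten_cons, List.length_append] at hn
        omega
      have := ih t₁ t₂ hlen (fun x hx => h1 x (List.mem_cons_of_mem _ hx)) (List.IsChain.tail hc1)
        (fun x hx => h2 x (List.mem_cons_of_mem _ hx)) (List.IsChain.tail hc2) htfl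
      rw [this]

end Aux

/-- Chen–Fox–Lyndon: every nonempty word `w` can be written uniquely as a concatenation
`w = u₁^{i₁} ⋯ u_k^{i_k}` of Lyndon words `u₁ > ⋯ > u_k`, i.e. as the concatenation of a
(weakly) non-increasing list of Lyndon words. -/
theorem lyndon_factorization {α : Type*} [LinearOrder α] (w : List α) (hw : w ≠ []) :
    ∃! l : List (List α),
      (∀ u ∈ l, IsLyndon u) ∧ List.Chain' (fun a b => b ≤ a) l ∧ l.flatten = w := by
  have hfl' : ∀ u : List α, (u.map (fun a => [a])).flatten = u := fun u => by
    induction u with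
    | nil => rfl
    | cons a t ih => simp [ih]
  have hfl : (w.map (fun a => [a])).flatten = w := hfl' w
  obtain ⟨m, hmly, hmch, hmfl, _⟩ := exists_chain (w.map (fun a => [a])).length
    (w.map (fun a => [a])) le_rfl
    (fun x hx => by
      obtain ⟨a, _, rfl⟩ := List.mem_map.mp hx
      exact isLyndon_singleton a)
  refine ⟨m, ⟨hmly, hmch, by rw [hmfl, hfl]⟩, ?_⟩
  rintro l ⟨hly, hch, hflat⟩
  exact unique_chain l.flatten.length l m le_rfl hly hch hmly hmch
    (by rw [hflat, hmfl, hfl])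
end

section
/- The number of Lyndon words of length s over a finite alphabet of size m equals Witt's necklace function φ_s(m) = (1/s) Σ_{d | s} μ(d) m^{s/d}. -/
theorem list_lt_char {α : Type*} [LinearOrder α] :
    ∀ (u v : List α), u < v ↔
      (∃ _h : u.length < v.length, ∀ x (hx : x < u.length),
          u[x]'hx = v[x]'(by omega)) ∨
      (∃ (j : ℕ) (h1 : j < u.length) (h2 : j < v.length),
        (∀ x (hx : x < j), u[x]'(by omega) = v[x]'(by omega)) ∧ u[j]'h1 < v[j]'h2)
  | [], [] => by
      constructor
      · intro h; cases h
      · rintro (⟨h, _⟩ | ⟨_, h, _, _⟩) <;> simp at h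
  | [], b :: bs => by
      constructor
      · intro _
        exact Or.inl ⟨by simp, fun x hx => by simp at hx⟩
      · intro _; exact List.nil_lt_cons b bs
  | a :: as, [] => by
      constructor
      · intro h; cases h
      · rintro (⟨h, _⟩ | ⟨_, _, h, _⟩) <;> simp at h
  | a :: as, b :: bs => by
      have ih := list_lt_char as bs
      constructor
      · intro h
        cases h with
        | cons h' =>
          rcases ih.mp h' with ⟨h, hagree⟩ | ⟨j, h1, h2, hag, hlt⟩
          · exact Or.inl ⟨by simpa using h, fun x hx => by
              match x with
              | 0 => rfl
              | x + 1 => simpa using hagree x (by simpa using hx)⟩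
          · exact Or.inr ⟨j + 1, by simpa using h1, by simpa using h2,
              fun x hx => by
                match x with
                | 0 => rfl
                | x + 1 => simpa using hag x (by omega),
              by simpa using hlt⟩
        | rel h' =>
          exact Or.inr ⟨0, by simp, by simp, fun x hx => by omega, by simpa using h'⟩
      · rintro (⟨h, hagree⟩ | ⟨j, h1, h2, hag, hlt⟩)
        · have hab : a = b := hagree 0 (by simp)
          subst hab
          exact List.Lex.cons (ih.mpr (Or.inl ⟨by simpa using h,
            fun x hx => hagree (x + 1) (by simpa using hx)⟩))
        · match j, h1, h2, hag, hlt with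
          | 0, _, _, _, hlt => exact List.Lex.rel (by simpa using hlt)
          | j + 1, h1, h2, hag, hlt =>
            have hab : a = b := by simpa using hag 0 (by omega)
            subst hab
            exact List.Lex.cons (ih.mpr (Or.inr ⟨j, by simpa using h1, by simpa using h2,
              fun x hx => by simpa using hag (x + 1) (by omega), by simpa using hlt⟩))

namespace LyndonNecklace
variable {m : ℕ}

/-- Rotate (left) a cyclic word by `j`. -/
def rotF {n : ℕ} (j : ℕ) (w : Fin n → Fin m) : Fin n → Fin m :=
  fun x => w ⟨((x : ℕ) + j) % n, Nat.mod_lt _ x.pos⟩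

lemma rotF_apply {n : ℕ} (j : ℕ) (w : Fin n → Fin m) (x : Fin n) :
    rotF j w x = w ⟨((x : ℕ) + j) % n, Nat.mod_lt _ x.pos⟩ := rfl

lemma rotF_add {n : ℕ} (a b : ℕ) (w : Fin n → Fin m) :
    rotF b (rotF a w) = rotF (a + b) w := by
  funext x
  simp only [rotF]
  congr 1
  apply Fin.ext
  simp only [Nat.mod_add_mod]
  congr 1
  omega

lemma rotF_mod {n : ℕ} (j : ℕ) (w : Fin n → Fin m) : rotF j w = rotF (j % n) w := by
  funext x
  simp only [rotF]
  congr 1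
  apply Fin.ext
  simp [Nat.add_mod, Nat.mod_mod_of_dvd]

lemma rotF_zero {n : ℕ} (w : Fin n → Fin m) : rotF 0 w = w := by
  funext x
  simp [rotF, Nat.mod_eq_of_lt x.2]

lemma rotF_n {n : ℕ} (w : Fin n → Fin m) : rotF n w = w := by
  funext x
  have := x.pos
  simp only [rotF]
  congr 1
  apply Fin.ext
  simp [Nat.add_mod, Nat.mod_eq_of_lt x.2]

lemma rotF_inj {n : ℕ} (j : ℕ) {w w' : Fin n → Fin m} (h : rotF j w = rotF j w') :
    w = w' := by
  rcases Nat.eq_zero_or_pos n with rfl | hn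
  · funext x; exact x.elim0
  have h2 := congrArg (rotF (n - j % n)) h
  rw [rotF_add, rotF_add] at h2
  have he : (j + (n - j % n)) % n = 0 := by
    have h3 : j % n < n := Nat.mod_lt _ hn
    have h4 : j % n ≤ j := Nat.mod_le j n
    have : j + (n - j % n) = (j - j % n) + n := by omega
    rw [this, Nat.add_mod_right]
    have : j - j % n = n * (j / n) := by
      have := Nat.mod_add_div j n
      omega
    simp [this, Nat.mul_mod_right]
  rw [rotF_mod, he, rotF_zero, rotF_mod (n := n) (w := w'), he, rotF_zero] at h2
  exact h2

/-- Strict lexicographic comparison of cyclic words (equal length). -/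
def ltW {n : ℕ} (a b : Fin n → Fin m) : Prop :=
  ∃ j : Fin n, (∀ x : Fin n, x < j → a x = b x) ∧ a j < b j

lemma ltW_ne {n : ℕ} {a b : Fin n → Fin m} (h : ltW a b) : a ≠ b := by
  rintro rfl
  obtain ⟨j, _, hj⟩ := h
  exact lt_irrefl _ hj

lemma ltW_asymm {n : ℕ} {a b : Fin n → Fin m} (h : ltW a b) (h' : ltW b a) : False := by
  obtain ⟨j, hag, hj⟩ := h
  obtain ⟨j', hag', hj'⟩ := h'
  rcases lt_trichotomy j j' with hlt | rfl | hlt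
  · have hba := hag' j hlt
    rw [hba] at hj
    exact lt_irrefl _ hj
  · exact lt_irrefl _ (hj.trans hj')
  · rw [hag j' hlt] at hj'
    exact lt_irrefl _ (hj'.trans hj')

lemma ltW_trans {n : ℕ} {a b c : Fin n → Fin m} (h : ltW a b) (h' : ltW b c) : ltW a c := by
  obtain ⟨j, hag, hj⟩ := h
  obtain ⟨j', hag', hj'⟩ := h'
  rcases lt_trichotomy j j' with hlt | rfl | hlt
  · exact ⟨j, fun x hx => (hag x hx).trans (hag' x (hx.trans hlt)), by
      rw [← hag' j hlt]; exact hj⟩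
  · exact ⟨j, fun x hx => (hag x hx).trans (hag' x hx), hj.trans hj'⟩
  · exact ⟨j', fun x hx => (hag x (hx.trans hlt)).trans (hag' x hx), by
      rw [hag j' hlt]; exact hj'⟩

lemma ltW_trichotomy {n : ℕ} {a b : Fin n → Fin m} (h : a ≠ b) : ltW a b ∨ ltW b a := by
  classical
  have hne : (Finset.univ.filter fun x : Fin n => a x ≠ b x).Nonempty := by
    by_contra hc
    apply h
    funext x
    have := Finset.not_nonempty_iff_eq_empty.mp hc
    by_contra hx
    have : x ∈ (Finset.univ.filter fun x : Fin n => a x ≠ b x) := by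
      simp [hx]
    simp [‹Finset.filter _ _ = ∅›] at this
  set S := Finset.univ.filter fun x : Fin n => a x ≠ b x with hS
  let j := S.min' hne
  have hjS : j ∈ S := S.min'_mem hne
  have hjne : a j ≠ b j := by simpa [hS] using hjS
  have hag : ∀ x : Fin n, x < j → a x = b x := by
    intro x hx
    by_contra hc
    have : x ∈ S := by simp [hS, hc]
    exact absurd (S.min'_le x this) (not_le_of_gt hx)
  rcases lt_or_gt_of_ne hjne with hlt | hlt
  · exact Or.inl ⟨j, hag, hlt⟩
  · exact Or.inr ⟨j, fun x hx => (hag x hx).symm, hlt⟩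

lemma exists_ltW_min {n : ℕ} (s : Finset (Fin n → Fin m)) (hs : s.Nonempty) :
    ∃ a ∈ s, ∀ b ∈ s, ¬ ltW b a := by
  classical
  induction s using Finset.induction_on with
  | empty => exact absurd hs (by simp)
  | @insert c t hct ih =>
    rcases t.eq_empty_or_nonempty with rfl | ht
    · exact ⟨c, by simp, by
        intro b hb
        simp only [Finset.mem_insert, Finset.notMem_empty, or_false] at hb
        subst hb
        intro hc
        exact ltW_ne hc rfl⟩
    · obtain ⟨a, ha, hmin⟩ := ih ht
      by_cases hca : ltW c a
      · refine ⟨c, by simp, ?_⟩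
        intro b hb hbc
        rcases Finset.mem_insert.mp hb with rfl | hbt
        · exact ltW_ne hbc rfl
        · exact hmin b hbt (ltW_trans hbc hca)
      · refine ⟨a, by simp [ha], ?_⟩
        intro b hb hba
        rcases Finset.mem_insert.mp hb with rfl | hbt
        · exact hca hba
        · exact hmin b hbt hba

open Classical in
noncomputable def perW {n : ℕ} (w : Fin n → Fin m) : ℕ :=
  if h : ∃ k, 0 < k ∧ rotF k w = w then Nat.find h else 0

lemma perW_exists {n : ℕ} (hn : 0 < n) (w : Fin n → Fin m) :
    ∃ k, 0 < k ∧ rotF k w = w := ⟨n, hn, rotF_n w⟩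

open Classical in
lemma perW_def {n : ℕ} (hn : 0 < n) (w : Fin n → Fin m) :
    perW w = Nat.find (perW_exists hn w) := by
  rw [perW, dif_pos (perW_exists hn w)]

lemma perW_pos {n : ℕ} (hn : 0 < n) (w : Fin n → Fin m) : 0 < perW w := by
  rw [perW_def hn w]
  exact (Nat.find_spec (perW_exists hn w)).1

lemma rotF_perW {n : ℕ} (hn : 0 < n) (w : Fin n → Fin m) : rotF (perW w) w = w := by
  rw [perW_def hn w]
  exact (Nat.find_spec (perW_exists hn w)).2

lemma perW_min {n : ℕ} (hn : 0 < n) (w : Fin n → Fin m) {k : ℕ} (hk : 0 < k)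
    (hkw : rotF k w = w) : perW w ≤ k := by
  rw [perW_def hn w]
  exact Nat.find_le ⟨hk, hkw⟩

lemma rotF_mul {n : ℕ} (w : Fin n → Fin m) (c k : ℕ) (h : rotF k w = w) :
    rotF (c * k) w = w := by
  induction c with
  | zero => simpa using rotF_zero w
  | succ c ih =>
    have h2 : rotF (c * k + k) w = rotF k (rotF (c * k) w) := (rotF_add _ _ _).symm
    rw [Nat.succ_mul, h2, ih, h]

lemma perW_dvd_iff {n : ℕ} (hn : 0 < n) (w : Fin n → Fin m) {j : ℕ} :
    rotF j w = w ↔ perW w ∣ j := by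
  constructor
  · intro h
    set d := perW w with hd
    have hdpos : 0 < d := perW_pos hn w
    have hdw : rotF d w = w := rotF_perW hn w
    have hr : rotF (j % d) w = w := by
      have h1 : rotF (j / d * d) w = w := rotF_mul w (j / d) d hdw
      have h2 : rotF (j % d) (rotF (j / d * d) w) = rotF (j / d * d + j % d) w :=
        rotF_add _ _ _
      have h3 : j / d * d + j % d = j := Nat.div_add_mod' j d
      rw [h1, h3] at h2
      rw [h2, h]
    by_contra hnd
    have hmod : 0 < j % d := Nat.pos_of_ne_zero fun h0 => hnd (Nat.dvd_of_mod_eq_zero h0)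
    have h4 := perW_min hn w hmod hr
    have h5 := Nat.mod_lt j hdpos
    omega
  · rintro ⟨c, rfl⟩
    rw [mul_comm]
    exact rotF_mul w c _ (rotF_perW hn w)

lemma perW_dvd {n : ℕ} (hn : 0 < n) (w : Fin n → Fin m) : perW w ∣ n :=
  (perW_dvd_iff hn w).mp (rotF_n w)

lemma eq_of_rot_period {n : ℕ} (hn : 0 < n) (w : Fin n → Fin m) {d : ℕ} (hd : 0 < d)
    (hdn : d ∣ n) (h : rotF d w = w) (x : Fin n) :
    w x = w ⟨(x : ℕ) % d, Nat.lt_of_lt_of_le (Nat.mod_lt _ hd) (Nat.le_of_dvd hn hdn)⟩ := by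
  obtain ⟨x, hx⟩ := x
  induction x using Nat.strong_induction_on with
  | _ x ih =>
    by_cases hxd : x < d
    · congr 1
      exact (Fin.ext (Nat.mod_eq_of_lt hxd)).symm
    · push_neg at hxd
      have hxd' : x - d < n := by omega
      have hstep := congrFun h ⟨x - d, hxd'⟩
      simp only [rotF] at hstep
      simp only [Nat.sub_add_cancel hxd, Nat.mod_eq_of_lt hx] at hstep
      have hmod : (x - d) % d = x % d := by
        conv_rhs => rw [← Nat.sub_add_cancel hxd, Nat.add_mod_right]
      calc w ⟨x, hx⟩ = w ⟨x - d, hxd'⟩ := hstep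
        _ = w ⟨(x - d) % d, _⟩ := ih (x - d) (by omega) hxd'
        _ = w ⟨x % d, _⟩ := by congr 1; exact Fin.ext hmod

def phiF {n : ℕ} {d : ℕ} (hd : 0 < d) (g : Fin d → Fin m) (i : ℕ) : Fin n → Fin m :=
  fun x => g ⟨((x : ℕ) + i) % d, Nat.mod_lt _ hd⟩

lemma phiF_mod {n d : ℕ} (hd : 0 < d) (g : Fin d → Fin m) (i : ℕ) :
    phiF (n := n) hd g i = phiF hd g (i % d) := by
  funext x
  simp only [phiF]
  congr 1
  exact Fin.ext (Nat.add_mod_mod _ _ _).symm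

lemma rotF_phiF {n d : ℕ} (hd : 0 < d) (hdn : d ∣ n) (g : Fin d → Fin m) (i j : ℕ) :
    rotF j (phiF (n := n) hd g i) = phiF hd g (i + j) := by
  funext x
  simp only [rotF, phiF]
  congr 1
  apply Fin.ext
  simp only []
  conv_lhs => rw [Nat.add_mod, Nat.mod_mod_of_dvd _ hdn, ← Nat.add_mod]
  congr 1
  omega

def LyndonF {d : ℕ} (g : Fin d → Fin m) : Prop :=
  ∀ i, 0 < i → i < d → ∃ j, ∃ h : i + j < d,
    (∀ x (hx : x < j), g ⟨x, by omega⟩ = g ⟨i + x, by omega⟩) ∧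
      g ⟨j, by omega⟩ < g ⟨i + j, h⟩

lemma lyndon_iff {d : ℕ} (hd : 0 < d) (g : Fin d → Fin m) :
    IsLyndon (List.ofFn g) ↔ LyndonF g := by
  have hlen : (List.ofFn g).length = d := List.length_ofFn
  constructor
  · intro hL i hi hid
    have h2 := hL.2 i hi (by omega)
    rcases (list_lt_char _ _).mp h2 with ⟨h, _⟩ | ⟨j, h1, h2', hag, hlt⟩
    · rw [List.length_drop, hlen] at h; omega
    · rw [List.length_drop, hlen] at h2'
      refine ⟨j, by omega, ?_, ?_⟩
      · intro x hx
        have := hag x hx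
        simpa [List.getElem_drop, List.getElem_ofFn] using this
      · simpa [List.getElem_drop, List.getElem_ofFn] using hlt
  · intro hF
    constructor
    · intro hnil
      rw [hnil] at hlen
      simp at hlen
      omega
    · intro i hi hiw
      rw [hlen] at hiw
      obtain ⟨j, hji, hag, hlt⟩ := hF i hi hiw
      refine (list_lt_char _ _).mpr (Or.inr ⟨j, by omega, ?_, ?_, ?_⟩)
      · rw [List.length_drop, hlen]; omega
      · intro x hx
        simp only [List.getElem_drop, List.getElem_ofFn]
        exact hag x hx
      · simp only [List.getElem_drop, List.getElem_ofFn]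
        exact hlt

lemma fin_congr {d : ℕ} {β : Type*} (r : Fin d → β) {a b : ℕ} {ha : a < d} {hb : b < d}
    (h : a = b) : r ⟨a, ha⟩ = r ⟨b, hb⟩ := by subst h; rfl

lemma lyndonF_not_periodic {d : ℕ} {g : Fin d → Fin m} (hg : LyndonF g) {e : ℕ}
    (he : 0 < e) (hed : e < d)
    (hper : ∀ y (hy : y + e < d), g ⟨y, by omega⟩ = g ⟨y + e, hy⟩) : False := by
  obtain ⟨j, hj, _, hlt⟩ := hg e he hed
  have h2 := hper j (by omega)
  have h3 : g ⟨j, by omega⟩ = g ⟨e + j, hj⟩ := h2.trans (fin_congr g (by omega))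
  exact absurd h3 (ne_of_lt hlt)

lemma per_phiF {n d : ℕ} (hn : 0 < n) (hd : 0 < d) (hdn : d ∣ n) {g : Fin d → Fin m}
    (hg : LyndonF g) (i : ℕ) : perW (phiF (n := n) hd g i) = d := by
  have hfix : rotF d (phiF (n := n) hd g i) = phiF (n := n) hd g i := by
    rw [rotF_phiF hd hdn, phiF_mod, Nat.add_mod_right, ← phiF_mod]
  have hdvd : perW (phiF (n := n) hd g i) ∣ d :=
    (perW_dvd_iff hn _).mp hfix
  set w := phiF (n := n) hd g i with hw
  set e := perW w with he
  have hepos : 0 < e := perW_pos hn w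
  have hele : e ≤ d := Nat.le_of_dvd hd hdvd
  rcases eq_or_lt_of_le hele with heq | hltd
  · exact heq
  exfalso
  have hrot : rotF e w = w := rotF_perW hn w
  apply lyndonF_not_periodic hg hepos hltd
  intro y hy
  set x0 := (y + (d - i % d)) % d with hx0
  have hx0d : x0 < d := Nat.mod_lt _ hd
  have hx0n : x0 < n := lt_of_lt_of_le hx0d (Nat.le_of_dvd hn hdn)
  have hile : i % d < d := Nat.mod_lt _ hd
  have harith1 : (x0 + i) % d = y := by
    rw [hx0, Nat.mod_add_mod, ← Nat.add_mod_mod,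
      show y + (d - i % d) + i % d = y + d by omega, Nat.add_mod_right,
      Nat.mod_eq_of_lt (by omega)]
  have harith2 : ((x0 + e) % n + i) % d = y + e := by
    rw [Nat.add_mod ((x0 + e) % n) i, Nat.mod_mod_of_dvd _ hdn, ← Nat.add_mod,
      show x0 + e + i = x0 + i + e by omega, ← Nat.mod_add_mod, harith1,
      Nat.mod_eq_of_lt (by omega)]
  have h1 := congrFun hrot ⟨x0, hx0n⟩
  have h2 : g ⟨((x0 + e) % n + i) % d, Nat.mod_lt _ hd⟩ = g ⟨(x0 + i) % d, Nat.mod_lt _ hd⟩ := h1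
  rw [fin_congr g harith2, fin_congr g harith1] at h2
  exact h2.symm

lemma ltW_pw_rot {n d : ℕ} (hn : 0 < n) (hd : 0 < d) (hdn : d ∣ n) {g : Fin d → Fin m}
    (hg : LyndonF g) {j : ℕ} (hj : ¬ d ∣ j) :
    ltW (phiF (n := n) hd g 0) (rotF j (phiF hd g 0)) := by
  rw [rotF_phiF hd hdn, zero_add, phiF_mod hd g j]
  set r := j % d with hr
  have hr0 : 0 < r := Nat.pos_of_ne_zero fun h0 => hj (Nat.dvd_of_mod_eq_zero h0)
  have hrd : r < d := Nat.mod_lt _ hd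
  obtain ⟨jj, hjj, hag, hlt⟩ := hg r hr0 hrd
  have hdn' : d ≤ n := Nat.le_of_dvd hn hdn
  refine ⟨⟨jj, by omega⟩, ?_, ?_⟩
  · intro x hx
    have hxv : (x : ℕ) < jj := hx
    show g ⟨((x : ℕ) + 0) % d, _⟩ = g ⟨((x : ℕ) + r) % d, _⟩
    rw [fin_congr g (show ((x : ℕ) + 0) % d = (x : ℕ) by
          rw [Nat.add_zero]; exact Nat.mod_eq_of_lt (by omega)),
      fin_congr g (show ((x : ℕ) + r) % d = r + (x : ℕ) by
          rw [Nat.mod_eq_of_lt (by omega)]; omega)]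
    exact hag (x : ℕ) hxv
  · show g ⟨(jj + 0) % d, _⟩ < g ⟨(jj + r) % d, _⟩
    rw [fin_congr g (show (jj + 0) % d = jj by
          rw [Nat.add_zero]; exact Nat.mod_eq_of_lt (by omega)),
      fin_congr g (show (jj + r) % d = r + jj by
          rw [Nat.mod_eq_of_lt (by omega)]; omega)]
    exact hlt

lemma min_primitive_lyndonF {d : ℕ} (hd : 0 < d) (r : Fin d → Fin m)
    (hprim : ∀ j, rotF j r = r → d ∣ j)
    (hmin : ∀ j, ¬ ltW (rotF j r) r) : LyndonF r := by
  intro i hi hid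
  have hne : rotF i r ≠ r := by
    intro h
    have h2 := Nat.le_of_dvd hi (hprim i h)
    omega
  rcases ltW_trichotomy hne with hlt | hlt
  · exact absurd hlt (hmin i)
  obtain ⟨j, hag, hjlt⟩ := hlt
  simp only [rotF] at hjlt
  by_cases hcase : (j : ℕ) + i < d
  · refine ⟨(j : ℕ), by omega, ?_, ?_⟩
    · intro x hx
      have h5 := hag ⟨x, by omega⟩ (by rw [Fin.lt_def]; exact hx)
      simp only [rotF] at h5
      exact h5.trans (fin_congr r (by rw [Nat.mod_eq_of_lt (by omega)]; omega))
    · calc r ⟨(j : ℕ), by omega⟩ = r j := by rw [Fin.eta]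
        _ < r ⟨((j : ℕ) + i) % d, by exact Nat.mod_lt _ hd⟩ := hjlt
        _ = r ⟨i + (j : ℕ), by omega⟩ := fin_congr r
            (by rw [Nat.mod_eq_of_lt (by omega)]; omega)
  · push_neg at hcase
    exfalso
    apply hmin (d - i)
    set a := (j : ℕ) + i - d with ha
    have haj : a < i := by omega
    refine ⟨⟨a, by omega⟩, ?_, ?_⟩
    · intro x hx
      have hxa : (x : ℕ) < a := hx
      show r ⟨((x : ℕ) + (d - i)) % d, _⟩ = r x
      have hx'j : ((x : ℕ) + (d - i)) < (j : ℕ) := by omega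
      have h5 := hag ⟨(x : ℕ) + (d - i), by omega⟩ (by rw [Fin.lt_def]; exact hx'j)
      simp only [rotF] at h5
      calc r ⟨((x : ℕ) + (d - i)) % d, _⟩
          = r ⟨(x : ℕ) + (d - i), by omega⟩ := fin_congr r (Nat.mod_eq_of_lt (by omega))
        _ = r ⟨((x : ℕ) + (d - i) + i) % d, Nat.mod_lt _ hd⟩ := h5
        _ = r ⟨(x : ℕ), by omega⟩ := fin_congr r
            (by rw [show (x : ℕ) + (d - i) + i = (x : ℕ) + d by omega, Nat.add_mod_right,
                Nat.mod_eq_of_lt (by omega)])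
        _ = r x := by rw [Fin.eta]
    · show r ⟨(a + (d - i)) % d, _⟩ < r ⟨a, _⟩
      calc r ⟨(a + (d - i)) % d, _⟩
          = r ⟨(j : ℕ), j.2⟩ := fin_congr r
            (by rw [Nat.mod_eq_of_lt (by omega)]; omega)
        _ = r j := by rw [Fin.eta]
        _ < r ⟨((j : ℕ) + i) % d, Nat.mod_lt _ hd⟩ := hjlt
        _ = r ⟨a, by omega⟩ := fin_congr r
            (by rw [show (j : ℕ) + i = a + d by omega, Nat.add_mod_right,
                Nat.mod_eq_of_lt (by omega)])


lemma rotF_comm {n : ℕ} (a b : ℕ) (w : Fin n → Fin m) :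
    rotF b (rotF a w) = rotF a (rotF b w) := by
  rw [rotF_add, rotF_add, Nat.add_comm]

lemma exists_decomp {n : ℕ} (hn : 0 < n) (w : Fin n → Fin m) {d : ℕ} (hper : perW w = d) :
    ∃ (hd : 0 < d) (g : Fin d → Fin m) (i : ℕ),
      i < d ∧ LyndonF g ∧ phiF (n := n) hd g i = w := by
  subst hper
  classical
  set S := (Finset.range n).image (fun j => rotF j w) with hS
  have hSne : S.Nonempty := ⟨rotF 0 w,
    Finset.mem_image.mpr ⟨0, Finset.mem_range.mpr hn, rfl⟩⟩
  obtain ⟨r, hrS, hrmin⟩ := exists_ltW_min S hSne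
  obtain ⟨j0, hj0m, hj0r⟩ := Finset.mem_image.mp hrS
  have hj0 : j0 < n := Finset.mem_range.mp hj0m
  have hminrot : ∀ j, ¬ ltW (rotF j r) r := by
    intro j
    apply hrmin
    rw [← hj0r, rotF_add, rotF_mod]
    exact Finset.mem_image.mpr ⟨(j0 + j) % n, Finset.mem_range.mpr (Nat.mod_lt _ hn), rfl⟩
  have hcomm : ∀ e, rotF e r = rotF j0 (rotF e w) := fun e => by
    rw [← hj0r, rotF_add, rotF_add, Nat.add_comm]
  have hperr : perW r = perW w := by
    apply Nat.dvd_antisymm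
    · apply (perW_dvd_iff hn r).mp
      rw [hcomm, rotF_perW hn w, hj0r]
    · apply (perW_dvd_iff hn w).mp
      have h1 := rotF_perW hn r
      rw [hcomm] at h1
      exact rotF_inj j0 (by rw [h1, hj0r])
  set d := perW w with hdw
  have hd : 0 < d := perW_pos hn w
  have hdn : d ∣ n := perW_dvd hn w
  have hdlen : d ≤ n := Nat.le_of_dvd hn hdn
  have hrot_d_r : rotF d r = r := by
    rw [← hperr]
    exact rotF_perW hn r
  set g : Fin d → Fin m := fun y => r ⟨(y : ℕ), lt_of_lt_of_le y.2 hdlen⟩ with hg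
  have hstruct : ∀ x : Fin n, r x = g ⟨(x : ℕ) % d, Nat.mod_lt _ hd⟩ := by
    intro x
    rw [eq_of_rot_period hn r hd hdn hrot_d_r x]
  have hrphi : phiF (n := n) hd g 0 = r := by
    funext x
    show g ⟨((x : ℕ) + 0) % d, _⟩ = r x
    exact (fin_congr g (by rw [Nat.add_zero])).trans (hstruct x).symm
  have hgprim : ∀ j, rotF j g = g → d ∣ j := by
    intro j hj
    have hjr : rotF j r = r := by
      funext x
      show r ⟨((x : ℕ) + j) % n, _⟩ = r x
      rw [hstruct ⟨((x : ℕ) + j) % n, Nat.mod_lt _ x.pos⟩, hstruct x]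
      have h7 := congrFun hj ⟨(x : ℕ) % d, Nat.mod_lt _ hd⟩
      simp only [rotF] at h7
      have e : ((x : ℕ) + j) % n % d = ((x : ℕ) % d + j) % d := by
        rw [Nat.mod_mod_of_dvd _ hdn, Nat.mod_add_mod]
      exact (fin_congr g e).trans h7
    rw [← hperr]
    exact (perW_dvd_iff hn r).mp hjr
  have hpw_mono : ∀ a b : Fin d → Fin m, ltW a b →
      ltW (phiF (n := n) hd a 0) (phiF hd b 0) := by
    rintro a b ⟨jj, hag, hlt⟩
    refine ⟨⟨(jj : ℕ), lt_of_lt_of_le jj.2 hdlen⟩, ?_, ?_⟩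
    · intro x hx
      have hxv : (x : ℕ) < (jj : ℕ) := hx
      have hxd : (x : ℕ) < d := hxv.trans jj.2
      show a ⟨((x : ℕ) + 0) % d, _⟩ = b ⟨((x : ℕ) + 0) % d, _⟩
      have e : ((x : ℕ) + 0) % d = (x : ℕ) := by
        rw [Nat.add_zero]; exact Nat.mod_eq_of_lt hxd
      have h8 := hag ⟨(x : ℕ), hxd⟩ (by rw [Fin.lt_def]; exact hxv)
      calc a ⟨((x : ℕ) + 0) % d, Nat.mod_lt _ hd⟩
          = a ⟨(x : ℕ), hxd⟩ := fin_congr a e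
        _ = b ⟨(x : ℕ), hxd⟩ := h8
        _ = b ⟨((x : ℕ) + 0) % d, Nat.mod_lt _ hd⟩ := (fin_congr b e).symm
    · show a ⟨((jj : ℕ) + 0) % d, _⟩ < b ⟨((jj : ℕ) + 0) % d, _⟩
      have e : ((jj : ℕ) + 0) % d = (jj : ℕ) := by
        rw [Nat.add_zero]; exact Nat.mod_eq_of_lt jj.2
      calc a ⟨((jj : ℕ) + 0) % d, Nat.mod_lt _ hd⟩
          = a ⟨(jj : ℕ), jj.2⟩ := fin_congr a e
        _ = a jj := congrArg a (Fin.eta jj jj.2)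
        _ < b jj := hlt
        _ = b ⟨(jj : ℕ), jj.2⟩ := congrArg b (Fin.eta jj jj.2).symm
        _ = b ⟨((jj : ℕ) + 0) % d, Nat.mod_lt _ hd⟩ := (fin_congr b e).symm
  have hgmin : ∀ j, ¬ ltW (rotF j g) g := by
    intro j hjl
    apply hminrot j
    have h8 : rotF j r = phiF (n := n) hd (rotF j g) 0 := by
      funext x
      show r ⟨((x : ℕ) + j) % n, _⟩ = (rotF j g) ⟨((x : ℕ) + 0) % d, _⟩
      rw [hstruct ⟨((x : ℕ) + j) % n, Nat.mod_lt _ x.pos⟩]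
      show g ⟨_, _⟩ = g ⟨_, _⟩
      apply fin_congr
      show ((x : ℕ) + j) % n % d = (((x : ℕ) + 0) % d + j) % d
      rw [Nat.mod_mod_of_dvd _ hdn, Nat.add_zero, Nat.mod_add_mod]
    rw [h8, ← hrphi]
    exact hpw_mono _ _ hjl
  have hglyn : LyndonF g := min_primitive_lyndonF hd g hgprim hgmin
  refine ⟨hd, g, (n - j0) % d, Nat.mod_lt _ hd, hglyn, ?_⟩
  rw [← phiF_mod, ← zero_add (n - j0), ← rotF_phiF hd hdn, hrphi, ← hj0r, rotF_add,
    show j0 + (n - j0) = n by omega, rotF_n]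

lemma phiF_inj {n d : ℕ} (hn : 0 < n) (hd : 0 < d) (hdn : d ∣ n)
    {g g' : Fin d → Fin m} (hg : LyndonF g) (hg' : LyndonF g')
    {i i' : ℕ} (hi : i < d) (hi' : i' < d)
    (h : phiF (n := n) hd g i = phiF (n := n) hd g' i') : g = g' ∧ i = i' := by
  have hdlen : d ≤ n := Nat.le_of_dvd hn hdn
  have hW : phiF (n := n) hd g i = rotF i (phiF hd g 0) := by
    rw [rotF_phiF hd hdn, Nat.zero_add]
  have hW' : phiF (n := n) hd g' i' = rotF i' (phiF hd g' 0) := by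
    rw [rotF_phiF hd hdn, Nat.zero_add]
  set W := phiF (n := n) hd g 0 with hWd
  set W' := phiF (n := n) hd g' 0 with hWd'
  have hr : rotF i W = rotF i' W' := by rw [← hW, ← hW', h]
  have h1 : W' = rotF (i + (n - i')) W := by
    have h2 := congrArg (rotF (n - i')) hr
    rw [rotF_add, rotF_add, show i' + (n - i') = n by omega, rotF_n] at h2
    exact h2.symm
  have h2 : W = rotF (i' + (n - i)) W' := by
    have h3 := congrArg (rotF (n - i)) hr
    rw [rotF_add, rotF_add, show i + (n - i) = n by omega, rotF_n] at h3
    exact h3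
  have key : ∀ {a b : ℕ}, a < d → b < d → d ∣ (a + (n - b)) → a = b := by
    intro a b had hbd hdvd
    have hnmod : n % d = 0 := by
      obtain ⟨c, rfl⟩ := hdn; exact Nat.mul_mod_right d c
    have hAmod : (a + (n - b)) % d = 0 := by
      obtain ⟨c, hc⟩ := hdvd; rw [hc]; exact Nat.mul_mod_right d c
    have e1 : (a + (n - b) + b) % d = (a + n) % d := by congr 1; omega
    rw [Nat.add_mod (a + (n - b)) b, hAmod, Nat.zero_add, Nat.mod_mod] at e1
    rw [Nat.add_mod a n, hnmod, Nat.add_zero, Nat.mod_mod] at e1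
    rw [Nat.mod_eq_of_lt hbd, Nat.mod_eq_of_lt had] at e1
    exact e1.symm
  have hii : i = i' := by
    by_contra hne
    have hnd1 : ¬ d ∣ (i + (n - i')) := fun hdvd => hne (key hi hi' hdvd)
    have hnd2 : ¬ d ∣ (i' + (n - i)) := fun hdvd => hne ((key hi' hi hdvd).symm)
    have l1 : ltW W W' := by rw [h1]; exact ltW_pw_rot hn hd hdn hg hnd1
    have l2 : ltW W' W := by rw [h2]; exact ltW_pw_rot hn hd hdn hg' hnd2
    exact (ltW_asymm l1 l2).elim
  refine ⟨?_, hii⟩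
  rw [← hii] at hr
  have hWW : W = W' := rotF_inj i hr
  funext y
  have hcf := congrFun hWW ⟨(y : ℕ), lt_of_lt_of_le y.2 hdlen⟩
  have hthis : g ⟨((y : ℕ) + 0) % d, Nat.mod_lt _ hd⟩
      = g' ⟨((y : ℕ) + 0) % d, Nat.mod_lt _ hd⟩ := hcf
  have e : ((y : ℕ) + 0) % d = (y : ℕ) := by
    rw [Nat.add_zero]; exact Nat.mod_eq_of_lt y.2
  calc g y = g ⟨(y : ℕ), y.2⟩ := (congrArg g (Fin.eta y y.2)).symm
    _ = g ⟨((y : ℕ) + 0) % d, Nat.mod_lt _ hd⟩ := (fin_congr g e).symm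
    _ = g' ⟨((y : ℕ) + 0) % d, Nat.mod_lt _ hd⟩ := hthis
    _ = g' ⟨(y : ℕ), y.2⟩ := fin_congr g' e
    _ = g' y := congrArg g' (Fin.eta y y.2)

open Classical in
lemma card_fiber {n : ℕ} (hn : 0 < n) {d : ℕ} (hd : 0 < d) (hdn : d ∣ n) :
    (Finset.univ.filter fun w : Fin n → Fin m => perW w = d).card =
      d * (Finset.univ.filter fun g : Fin d → Fin m => LyndonF g).card := by
  classical
  have hcard : (((Finset.univ.filter fun g : Fin d → Fin m => LyndonF g)) ×ˢ
      (Finset.univ : Finset (Fin d))).card =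
      (Finset.univ.filter fun g : Fin d → Fin m => LyndonF g).card * d := by
    rw [Finset.card_product, Finset.card_univ, Fintype.card_fin]
  rw [← Nat.mul_comm ((Finset.univ.filter fun g : Fin d → Fin m => LyndonF g)).card d,
    ← hcard]
  symm
  apply Finset.card_bij (fun p _ => phiF (n := n) hd p.1 (p.2 : ℕ))
  · rintro ⟨g, i⟩ hp
    rw [Finset.mem_product, Finset.mem_filter] at hp
    rw [Finset.mem_filter]
    exact ⟨Finset.mem_univ _, per_phiF hn hd hdn hp.1.2 _⟩
  · rintro ⟨g, i⟩ hp ⟨g', i'⟩ hp' heq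
    rw [Finset.mem_product, Finset.mem_filter] at hp hp'
    obtain ⟨hgg, hii⟩ := phiF_inj hn hd hdn hp.1.2 hp'.1.2 i.2 i'.2 heq
    simp only [Prod.mk.injEq]
    exact ⟨hgg, Fin.ext hii⟩
  · intro w hw
    rw [Finset.mem_filter] at hw
    obtain ⟨hd', g, i, hi, hgl, hphi⟩ := exists_decomp hn w hw.2
    refine ⟨(g, ⟨i, hi⟩), ?_, hphi⟩
    rw [Finset.mem_product, Finset.mem_filter]
    exact ⟨⟨Finset.mem_univ _, hgl⟩, Finset.mem_univ _⟩

open Classical in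
lemma key_count (n : ℕ) (hn : 0 < n) :
    m ^ n = ∑ d ∈ n.divisors, d *
      (Finset.univ.filter fun g : Fin d → Fin m => IsLyndon (List.ofFn g)).card := by
  classical
  have h0 : (Finset.univ : Finset (Fin n → Fin m)).card = m ^ n := by
    simp [Finset.card_univ, Fintype.card_fun]
  have h1 := Finset.card_eq_sum_card_fiberwise
    (f := fun w : Fin n → Fin m => perW w) (s := Finset.univ) (t := n.divisors)
    (fun w _ => Nat.mem_divisors.mpr ⟨perW_dvd hn w, hn.ne'⟩)
  rw [← h0, h1]
  apply Finset.sum_congr rfl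
  intro d hd
  obtain ⟨hdn, -⟩ := Nat.mem_divisors.mp hd
  have hdpos : 0 < d := Nat.pos_of_dvd_of_pos hdn hn
  rw [card_fiber hn hdpos hdn]
  congr 1
  exact congrArg Finset.card
    (Finset.filter_congr (fun g _ => (lyndon_iff hdpos g).symm))

end LyndonNecklace

open Classical in
/-- The number of Lyndon words of length `s ≥ 1` over an alphabet of size `m` equals
Witt's necklace function `φ_s(m) = (1/s) ∑_{d ∣ s} μ(d) m^(s/d)`. -/
theorem card_lyndon_eq_necklace (m s : ℕ) (hs : 1 ≤ s) :
    (s : ℤ) * (Finset.univ.filter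
        fun f : Fin s → Fin m => IsLyndon (List.ofFn f)).card =
      ∑ d ∈ s.divisors, ArithmeticFunction.moebius d * (m : ℤ) ^ (s / d) := by
  classical
  have hmain := (ArithmeticFunction.sum_eq_iff_sum_smul_moebius_eq (R := ℤ)
    (f := fun d => (d : ℤ) *
      ((Finset.univ.filter fun g : Fin d → Fin m => IsLyndon (List.ofFn g)).card : ℤ))
    (g := fun n => (m : ℤ) ^ n)).mp ?hyp s hs
  · rw [← Nat.sum_divisorsAntidiagonal
      (fun d e => ArithmeticFunction.moebius d * (m : ℤ) ^ e)]
    rw [← hmain]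
    apply Finset.sum_congr rfl
    intro x _
    simp [zsmul_eq_mul]
  case hyp =>
    intro n hn
    have := LyndonNecklace.key_count (m := m) n hn
    have hcast := congrArg (fun k : ℕ => (k : ℤ)) this
    push_cast at hcast
    exact hcast.symm
end
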